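/- Let μ be a positive finite Borel measure on [0,1) with μ((0,1)) > 0, moments μ_n, and suppose λ is an eigenvalue of the Cesàro-type operator C_μ acting on H(𝔻), where C_μ(∑ a_n zⁿ) = ∑ μ_n(∑_{k≤n} a_k) zⁿ. Then λ = μ_{n₀} for some n₀ ∈ ℕ₀, i.e., σ_p(C_μ, H(𝔻)) ⊆ {μ_n : n ∈ ℕ₀}. -/
import Mathlib


open MeasureTheory Finset

/-- The point spectrum of the Cesàro-type operator `C_μ` on `H(𝔻)` is contained in the
set of moments. A holomorphic function on the disc is represented by its Taylor
coefficient sequence `a`, and the eigen-equation `C_μ f = λ f` by the coefficientwise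
identities `μ_n (∑_{k ≤ n} a_k) = λ a_n`. -/
theorem point_spectrum_subset_moments
    (μ : Measure ℝ) [IsFiniteMeasure μ]
    (hsupp : μ (Set.Ico (0:ℝ) 1)ᶜ = 0)
    (hpos : 0 < μ (Set.Ioo (0:ℝ) 1))
    (lam : ℂ) (a : ℕ → ℂ)
    (hconv : ∀ z : ℂ, ‖z‖ < 1 → Summable (fun n : ℕ => a n * z ^ n))
    (hne : a ≠ 0)
    (heig : ∀ n : ℕ, ((∫ t, t ^ n ∂μ : ℝ) : ℂ) *
        (∑ k ∈ Finset.range (n + 1), a k) = lam * a n) :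
    ∃ n₀ : ℕ, lam = ((∫ t, t ^ n₀ ∂μ : ℝ) : ℂ) := by
  by_contra h
  push_neg at h
  apply hne
  funext n
  show a n = 0
  induction n using Nat.strong_induction_on with
  | _ n ih =>
    have hsum : ∑ k ∈ Finset.range (n + 1), a k = a n := by
      rw [Finset.sum_range_succ,
        Finset.sum_eq_zero (fun k hk => ih k (Finset.mem_range.mp hk)), zero_add]
    have hn := heig n
    rw [hsum] at hn
    have hz : (((∫ t, t ^ n ∂μ : ℝ) : ℂ) - lam) * a n = 0 := by
      rw [sub_mul, hn, sub_self]
    rcases mul_eq_zero.mp hz with h1 | h1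
    · exact absurd (sub_eq_zero.mp h1).symm (h n)
    · exact h1
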